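/- Let m, n, s be positive integers with m ≥ 2, M ≥ sm, and set N = ⌊C(M,m)·n / C(M/s,m)⌋ where s divides M. Then every s-edge-coloring of K_{M,N} contains a monochromatic K_{m,n}. -/
import Mathlib

/-- Tangent-line bound for the (convex) function `x ↦ x.choose (m+1)` at the point `p`,
stated additively in `ℕ`. -/
lemma choose_tangent (m p x : ℕ) :
    p.choose (m + 1) + x * p.choose m ≤ x.choose (m + 1) + p * p.choose m := by
  rcases le_total p x with hx | hx
  · induction x, hx using Nat.le_induction with
    | base => omega
    | succ x hx ih =>
      have h1 : (x + 1).choose (m + 1) = x.choose m + x.choose (m + 1) :=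
        Nat.choose_succ_succ x m
      have h2 : p.choose m ≤ x.choose m := Nat.choose_le_choose m hx
      have h3 : (x + 1) * p.choose m = x * p.choose m + p.choose m := by ring
      omega
  · induction p, hx using Nat.le_induction with
    | base => omega
    | succ p hp ih =>
      have h1 : (p + 1).choose (m + 1) = p.choose m + p.choose (m + 1) :=
        Nat.choose_succ_succ p m
      have h2 : p.choose m ≤ (p + 1).choose m := Nat.choose_le_choose m (Nat.le_succ p)
      zify at ih h1 h2 ⊢
      nlinarith [mul_le_mul_of_nonneg_left h2
        (by omega : (0:ℤ) ≤ (p:ℤ) + 1 - (x:ℤ))]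

/-- Discrete Jensen inequality for binomial coefficients. -/
lemma choose_jensen {ι : Type*} (m p : ℕ) (F : Finset ι) (f : ι → ℕ)
    (h : F.card * p ≤ ∑ b ∈ F, f b) :
    F.card * p.choose (m + 1) ≤ ∑ b ∈ F, (f b).choose (m + 1) := by
  have key := Finset.sum_le_sum (fun b (_ : b ∈ F) => choose_tangent m p (f b))
  rw [Finset.sum_add_distrib, Finset.sum_add_distrib, Finset.sum_const, ← Finset.sum_mul,
    Finset.sum_const, smul_eq_mul, smul_eq_mul] at key
  have h2 : F.card * (p * p.choose m) ≤ (∑ b ∈ F, f b) * p.choose m := by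
    rw [← mul_assoc]; exact Nat.mul_le_mul_right _ h
  omega

theorem complete_bipartite_arrows (m n s M : ℕ) (hm : 2 ≤ m) (hn : 1 ≤ n) (hs : 1 ≤ s)
    (hdvd : s ∣ M) (hM : s * m ≤ M)
    (N : ℕ) (hN : N = M.choose m * n / (M / s).choose m)
    (c : Fin M → Fin N → Fin s) :
    ∃ (i : Fin s) (S : Finset (Fin M)) (T : Finset (Fin N)),
      S.card = m ∧ T.card = n ∧ ∀ a ∈ S, ∀ b ∈ T, c a b = i := by
  set p := M / s with hp
  have hsp : s * p = M := Nat.mul_div_cancel' hdvd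
  have hmp : m ≤ p := Nat.le_of_mul_le_mul_left (by rw [hsp]; exact hM) (by omega)
  have hpM : p ≤ M := by nlinarith
  obtain ⟨n', rfl⟩ : ∃ n', n = n' + 1 := ⟨n - 1, by omega⟩
  have hCp : 0 < p.choose m := Nat.choose_pos hmp
  have hCpM : p.choose m ≤ M.choose m := Nat.choose_le_choose m hpM
  -- Step 1: find a color class with at least N * p edges
  obtain ⟨i₀, hi₀⟩ : ∃ i : Fin s, N * p ≤
      ∑ b : Fin N, (Finset.univ.filter (fun a => c a b = i)).card := by
    by_contra hcon
    push_neg at hcon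
    have htot : ∑ i : Fin s, ∑ b : Fin N,
        (Finset.univ.filter (fun a => c a b = i)).card = N * M := by
      rw [Finset.sum_comm]
      have hb : ∀ b : Fin N, ∑ i : Fin s,
          (Finset.univ.filter (fun a => c a b = i)).card = M := by
        intro b
        rw [← Finset.card_eq_sum_card_fiberwise
          (f := fun a => c a b) (t := Finset.univ) (fun a _ => Finset.mem_univ _)]
        simp
      simp [hb, Finset.sum_const, mul_comm]
    have hlt : ∑ i : Fin s, ∑ b : Fin N,
        (Finset.univ.filter (fun a => c a b = i)).card < ∑ _i : Fin s, N * p := by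
      apply Finset.sum_lt_sum_of_nonempty
      · exact Finset.univ_nonempty_iff.mpr ⟨⟨0, hs⟩⟩
      · exact fun i _ => hcon i
    rw [htot, Finset.sum_const, Finset.card_univ, Fintype.card_fin, smul_eq_mul] at hlt
    nlinarith
  -- the color class in column b
  set A : Fin N → Finset (Fin M) := fun b => Finset.univ.filter (fun a => c a b = i₀) with hA
  -- Step 2: Jensen
  obtain ⟨m', rfl⟩ : ∃ m', m = m' + 1 := ⟨m - 1, by omega⟩
  have hjen : N * p.choose (m' + 1) ≤ ∑ b : Fin N, ((A b).card).choose (m' + 1) := by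
    have := choose_jensen m' p Finset.univ (fun b => (A b).card) (by simpa using hi₀)
    simpa using this
  -- Step 3: double counting over m-subsets
  set P : Finset (Finset (Fin M)) := Finset.univ.powersetCard (m' + 1) with hP
  have hPcard : P.card = M.choose (m' + 1) := by
    rw [hP, Finset.card_powersetCard, Finset.card_univ, Fintype.card_fin]
  have hdouble : ∑ b : Fin N, ((A b).card).choose (m' + 1) =
      ∑ S ∈ P, (Finset.univ.filter (fun b => S ⊆ A b)).card := by
    have h1 : ∀ b : Fin N, ((A b).card).choose (m' + 1) =
        (P.filter (fun S => S ⊆ A b)).card := by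
      intro b
      rw [← Finset.card_powersetCard]
      congr 1
      ext S
      simp only [Finset.mem_filter, hP, Finset.mem_powersetCard, Finset.subset_univ,
        true_and]
      tauto
    simp only [h1, Finset.card_filter]
    rw [Finset.sum_comm]
  -- Step 4: arithmetic: N * C(p,m) > (n-1) * C(M,m)
  have harith : n' * M.choose (m' + 1) < N * p.choose (m' + 1) := by
    have hdm := Nat.div_add_mod (M.choose (m' + 1) * (n' + 1)) (p.choose (m' + 1))
    have hmod : M.choose (m' + 1) * (n' + 1) % p.choose (m' + 1) < p.choose (m' + 1) :=
      Nat.mod_lt _ hCp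
    rw [← hN] at hdm
    nlinarith [hCpM]
  -- Step 5: pigeonhole over subsets
  obtain ⟨S, hSP, hScount⟩ : ∃ S ∈ P,
      n' + 1 ≤ (Finset.univ.filter (fun b => S ⊆ A b)).card := by
    by_contra hcon
    push_neg at hcon
    have hbound : ∑ S ∈ P, (Finset.univ.filter (fun b => S ⊆ A b)).card ≤ P.card • n' :=
      Finset.sum_le_card_nsmul _ _ _ (fun S hS => by have := hcon S hS; omega)
    rw [hPcard, smul_eq_mul, mul_comm] at hbound
    omega
  obtain ⟨T, hTsub, hTcard⟩ := Finset.exists_subset_card_eq hScount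
  refine ⟨i₀, S, T, ?_, hTcard, ?_⟩
  · rw [hP] at hSP
    exact (Finset.mem_powersetCard.mp hSP).2
  · intro a ha b hb
    have hbA : S ⊆ A b := (Finset.mem_filter.mp (hTsub hb)).2
    have := hbA ha
    rw [hA] at this
    exact (Finset.mem_filter.mp this).2
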